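/- Let A be a cyclic c-noncrossing arc diagram and γ, γ' two disjoint partial chains of A with min(γ) < min(γ') < max(γ). Then exactly one of the following holds: (a) min(γ) < min(γ') < max(γ) < max(γ') and the pair (min(γ'), max(γ)) has one coordinate in L̄_c and the other in R̄_c; or (b) min(γ) < min(γ') ≤ max(γ') < max(γ) and min(γ'), max(γ') both lie in L̄_c or both lie in R̄_c. -/
import Mathlib


open scoped Classical

noncomputable section

/-- `x` lies in `S + nℤ` (e.g. `x ∈ L̄_c` for `S = L_c`). -/
def inBar (n : ℕ) (S : Finset ℤ) (x : ℤ) : Prop := ∃ s ∈ S, (n : ℤ) ∣ (x - s)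

/-- The set of points strictly between the endpoints of the arc `p → q` passing on its
left, i.e. lying in `L̄_c`. -/
def arcLeft (n : ℕ) (Lc : Finset ℤ) (p q : ℤ) : Set ℤ :=
  {x | p < x ∧ x < q ∧ inBar n Lc x}

/-- The set of points strictly between the endpoints of the arc `p → q` passing on its
right, i.e. lying in `R̄_c`. -/
def arcRight (n : ℕ) (Rc : Finset ℤ) (p q : ℤ) : Set ℤ :=
  {x | p < x ∧ x < q ∧ inBar n Rc x}

/-- Two arcs `a = (p,q,L,R)` and `b = (p',q',L',R')` (with `L`, `R` determined by the
endpoints as the points of `L̄_c`, `R̄_c` between them) cross: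
`((L∪{p,q})∩R') ∪ (L∩{p',q'}) ≠ ∅` and `(R∩(L'∪{p',q'})) ∪ ({p,q}∩L') ≠ ∅`. -/
def Cross (n : ℕ) (Lc Rc : Finset ℤ) (a b : ℤ × ℤ) : Prop :=
  (((arcLeft n Lc a.1 a.2 ∪ {a.1, a.2}) ∩ arcRight n Rc b.1 b.2) ∪
      (arcLeft n Lc a.1 a.2 ∩ {b.1, b.2})).Nonempty ∧
  ((arcRight n Rc a.1 a.2 ∩ (arcLeft n Lc b.1 b.2 ∪ {b.1, b.2})) ∪
      ({a.1, a.2} ∩ arcLeft n Lc b.1 b.2)).Nonempty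

/-- A cyclic `c`-noncrossing arc diagram on `n` points: a translation-invariant (by `n`)
collection of pairwise noncrossing arcs `p → q` (`p < q`, `p ≢ q (mod n)`), each with its
left points in `L̄_c` and right points in `R̄_c` (so it is determined by its endpoints),
all of whose loops are real. -/
structure CNCAD (n : ℕ) (Lc Rc : Finset ℤ) where
  arcs : Set (ℤ × ℤ)
  incr : ∀ a ∈ arcs, a.1 < a.2
  distinctRes : ∀ a ∈ arcs, ¬ (n : ℤ) ∣ (a.2 - a.1)
  inv : ∀ p q : ℤ, (p, q) ∈ arcs ↔ (p + n, q + n) ∈ arcs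
  noncross : ∀ a ∈ arcs, ∀ b ∈ arcs, a ≠ b → ¬ Cross n Lc Rc a b
  realLoop : ∀ g : ℤ → ℤ, (∀ t : ℤ, (g t, g (t + 1)) ∈ arcs) →
    (∃ t : ℤ, inBar n Lc (g t)) ∧ (∃ t : ℤ, inBar n Rc (g t))

/-- A partial chain of the diagram `A`: a finite sequence of at least two points in which
each consecutive pair is an arc of `A` (so the final point of each arc is the initial
point of the next). Its minimum is its head and its maximum its last element. -/
def IsPChain {n : ℕ} {Lc Rc : Finset ℤ} (A : CNCAD n Lc Rc) (l : List ℤ) : Prop :=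
  2 ≤ l.length ∧ l.Chain' (fun a b => (a, b) ∈ A.arcs)

-- AUX START
namespace Stmt15Aux

theorem glcc (x y : ℤ) (r : List ℤ) : (x::y::r).getLastI = (y::r).getLastI := by
  rw [List.getLastI_eq_getLast?, List.getLastI_eq_getLast?, List.getLast?_cons_cons]

theorem glmem : ∀ (l : List ℤ), l ≠ [] → l.getLastI ∈ l
  | [x], _ => by simp [List.getLastI]
  | x :: y :: r, _ => by
    rw [glcc]
    exact List.mem_cons_of_mem _ (glmem (y::r) (by simp))

variable {n : ℕ} {Lc Rc : Finset ℤ}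

theorem side_total (hn : 0 < n) (hun : Lc ∪ Rc = Finset.Icc (1 : ℤ) (n : ℤ)) (x : ℤ) :
    inBar n Lc x ∨ inBar n Rc x := by
  have h0 : (0:ℤ) < n := by exact_mod_cast hn
  set r : ℤ := (x - 1) % n + 1 with hrdef
  have h1 : 0 ≤ (x-1) % n := Int.emod_nonneg _ (ne_of_gt h0)
  have h2 : (x-1) % n < n := Int.emod_lt_of_pos _ h0
  have hr : r ∈ Finset.Icc (1:ℤ) (n:ℤ) := by
    rw [Finset.mem_Icc]; omega
  have heq : (n:ℤ) * ((x-1) / n) + (x-1) % n = x - 1 := Int.mul_ediv_add_emod _ _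
  have hdvd : (n:ℤ) ∣ (x - r) := ⟨(x-1)/n, by omega⟩
  rw [← hun, Finset.mem_union] at hr
  rcases hr with h | h
  · exact Or.inl ⟨r, h, hdvd⟩
  · exact Or.inr ⟨r, h, hdvd⟩

theorem side_not_both (hdis : Disjoint Lc Rc)
    (hun : Lc ∪ Rc = Finset.Icc (1 : ℤ) (n : ℤ)) (x : ℤ) :
    ¬ (inBar n Lc x ∧ inBar n Rc x) := by
  rintro ⟨⟨s, hs, k, hk⟩, ⟨s', hs', k', hk'⟩⟩
  have hsI : s ∈ Finset.Icc (1:ℤ) (n:ℤ) := hun ▸ Finset.mem_union_left _ hs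
  have hs'I : s' ∈ Finset.Icc (1:ℤ) (n:ℤ) := hun ▸ Finset.mem_union_right _ hs'
  rw [Finset.mem_Icc] at hsI hs'I
  have hss' : s = s' := by
    have hd : s - s' = (n:ℤ) * (k' - k) := by linarith [hk, hk']
    rcases lt_trichotomy (k' - k) 0 with h | h | h
    · nlinarith
    · rw [h, mul_zero] at hd; omega
    · nlinarith
  subst hss'
  exact (Finset.disjoint_left.mp hdis hs) hs'

variable {A : CNCAD n Lc Rc}

/-- crossing criterion, case p < s < q < t : s and q are on different sides. -/
theorem arcA1 (ha : (p,q) ∈ A.arcs) (hb : (s,t) ∈ A.arcs)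
    (h1 : p < s) (h2 : s < q) (h3 : q < t) :
    ¬ (inBar n Lc s ∧ inBar n Lc q) ∧ ¬ (inBar n Rc s ∧ inBar n Rc q) := by
  constructor
  · rintro ⟨hs, hq⟩
    refine A.noncross _ hb _ ha (by simp; omega) ?_
    constructor
    · exact ⟨q, Or.inr ⟨⟨h2, h3, hq⟩, by simp⟩⟩
    · exact ⟨s, Or.inr ⟨by simp, ⟨h1, h2, hs⟩⟩⟩
  · rintro ⟨hs, hq⟩
    refine A.noncross _ ha _ hb (by simp; omega) ?_
    constructor
    · exact ⟨q, Or.inl ⟨Or.inr (by simp), ⟨h2, h3, hq⟩⟩⟩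
    · exact ⟨s, Or.inl ⟨⟨h1, h2, hs⟩, Or.inr (by simp)⟩⟩

/-- crossing criterion, nested case p < s < t < q : s and t are on the same side. -/
theorem arcA2 (ha : (p,q) ∈ A.arcs) (hb : (s,t) ∈ A.arcs)
    (h1 : p < s) (h2 : s < t) (h3 : t < q) :
    ¬ (inBar n Lc s ∧ inBar n Rc t) ∧ ¬ (inBar n Rc s ∧ inBar n Lc t) := by
  constructor
  · rintro ⟨hs, ht⟩
    refine A.noncross _ ha _ hb (by simp; omega) ?_
    constructor
    · exact ⟨s, Or.inr ⟨⟨h1, by omega, hs⟩, by simp⟩⟩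
    · exact ⟨t, Or.inl ⟨⟨by omega, h3, ht⟩, Or.inr (by simp)⟩⟩
  · rintro ⟨hs, ht⟩
    refine A.noncross _ ha _ hb (by simp; omega) ?_
    constructor
    · exact ⟨t, Or.inr ⟨⟨by omega, h3, ht⟩, by simp⟩⟩
    · exact ⟨s, Or.inl ⟨⟨h1, by omega, hs⟩, Or.inr (by simp)⟩⟩

variable {n : ℕ} {Lc Rc : Finset ℤ}

theorem diff_side (hn : 0 < n) (hdis : Disjoint Lc Rc)
    (hun : Lc ∪ Rc = Finset.Icc (1 : ℤ) (n : ℤ)) {x y : ℤ}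
    (h : ¬ (inBar n Lc x ∧ inBar n Lc y) ∧ ¬ (inBar n Rc x ∧ inBar n Rc y)) :
    ¬ (inBar n Lc x ↔ inBar n Lc y) := by
  have tx := side_total hn hun x
  have ty := side_total hn hun y
  have nx := side_not_both hdis hun x
  have ny := side_not_both hdis hun y
  tauto

theorem same_side (hn : 0 < n) (hdis : Disjoint Lc Rc)
    (hun : Lc ∪ Rc = Finset.Icc (1 : ℤ) (n : ℤ)) {x y : ℤ}
    (h : ¬ (inBar n Lc x ∧ inBar n Rc y) ∧ ¬ (inBar n Rc x ∧ inBar n Lc y)) :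
    (inBar n Lc x ↔ inBar n Lc y) := by
  have tx := side_total hn hun x
  have ty := side_total hn hun y
  have nx := side_not_both hdis hun x
  have ny := side_not_both hdis hun y
  tauto

theorem mk_diff (hn : 0 < n) (hdis : Disjoint Lc Rc)
    (hun : Lc ∪ Rc = Finset.Icc (1 : ℤ) (n : ℤ)) {x y : ℤ}
    (h : ¬ (inBar n Lc x ↔ inBar n Lc y)) :
    (inBar n Lc x ∧ inBar n Rc y) ∨ (inBar n Rc x ∧ inBar n Lc y) := by
  have tx := side_total hn hun x
  have ty := side_total hn hun y
  have nx := side_not_both hdis hun x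
  have ny := side_not_both hdis hun y
  tauto

theorem mk_same (hn : 0 < n) (hdis : Disjoint Lc Rc)
    (hun : Lc ∪ Rc = Finset.Icc (1 : ℤ) (n : ℤ)) {x y : ℤ}
    (h : inBar n Lc x ↔ inBar n Lc y) :
    (inBar n Lc x ∧ inBar n Lc y) ∨ (inBar n Rc x ∧ inBar n Rc y) := by
  have tx := side_total hn hun x
  have ty := side_total hn hun y
  have nx := side_not_both hdis hun x
  have ny := side_not_both hdis hun y
  tauto

variable {A : CNCAD n Lc Rc}

theorem chain_lt {l : List ℤ} (h : l.Chain' (fun a b => (a, b) ∈ A.arcs)) :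
    l.Chain' (· < ·) :=
  h.imp (fun a b hab => A.incr (a, b) hab)

theorem head_le_last : ∀ (l : List ℤ), l ≠ [] → l.Chain' (· < ·) → l.headI ≤ l.getLastI
  | [x], _, _ => le_refl x
  | x :: y :: r, _, h => by
    rw [glcc]
    exact le_trans (le_of_lt (List.isChain_cons_cons.mp h).1)
      (head_le_last (y :: r) (by simp) (List.isChain_cons_cons.mp h).2)

theorem walk (hn : 0 < n) (hdis : Disjoint Lc Rc)
    (hun : Lc ∪ Rc = Finset.Icc (1 : ℤ) (n : ℤ)) {p q : ℤ} (hpq : (p, q) ∈ A.arcs) :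
    ∀ (l : List ℤ), l ≠ [] → l.Chain' (fun a b => (a, b) ∈ A.arcs) →
      p < l.headI → l.headI < q → q ∉ l →
      (q < l.getLastI → ¬ (inBar n Lc l.headI ↔ inBar n Lc q)) ∧
      (l.getLastI < q → (inBar n Lc l.headI ↔ inBar n Lc l.getLastI))
  | [x], _, _, hp, hq, _ => by
    refine ⟨fun h => absurd (h.trans hq) (lt_irrefl _), fun _ => Iff.rfl⟩
  | x :: y :: r, _, hch, hp, hq, hql => by
    have hxy : (x, y) ∈ A.arcs := (List.isChain_cons_cons.mp hch).1
    have hch2 := (List.isChain_cons_cons.mp hch).2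
    have hxy' : x < y := A.incr (x, y) hxy
    have hqy : q ≠ y := fun h => hql (by simp [h])
    simp only [List.headI_cons] at hp hq ⊢
    rw [glcc]
    rcases lt_or_gt_of_ne hqy with hqy' | hqy'
    · -- q < y : arcs (p,q) and (x,y) with p < x < q < y
      have hd : ¬ (inBar n Lc x ↔ inBar n Lc q) :=
        diff_side hn hdis hun (arcA1 hpq hxy hp hq hqy')
      have hyM : y ≤ (y :: r).getLastI :=
        head_le_last (y :: r) (by simp) (chain_lt hch2)
      exact ⟨fun _ => hd, fun h => absurd (hqy'.trans_le hyM) (not_lt.mpr h.le)⟩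
    · -- y < q : arcs (p,q) outer, (x,y) nested: p < x < y < q
      have hs : (inBar n Lc x ↔ inBar n Lc y) :=
        same_side hn hdis hun (arcA2 hpq hxy hp hxy' hqy')
      have IH := walk hn hdis hun hpq (y :: r) (by simp) hch2 (hp.trans hxy') hqy'
        (fun h => hql (List.mem_cons_of_mem _ h))
      simp only [List.headI_cons] at IH
      exact ⟨fun h => fun hc => (IH.1 h) (hs.symm.trans hc),
             fun h => hs.trans (IH.2 h)⟩

theorem locate (hn : 0 < n) (hdis : Disjoint Lc Rc)
    (hun : Lc ∪ Rc = Finset.Icc (1 : ℤ) (n : ℤ)) {p q : ℤ} (hpq : (p, q) ∈ A.arcs) :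
    ∀ (l : List ℤ), l.Chain' (fun a b => (a, b) ∈ A.arcs) →
      l.headI < p → p < l.getLastI → p ∉ l → q ∉ l →
      (q < l.getLastI ∧ (inBar n Lc p ↔ inBar n Lc q)) ∨
      (l.getLastI < q ∧ ¬ (inBar n Lc p ↔ inBar n Lc l.getLastI))
  | [], _, h1, h2, _, _ => absurd (h1.trans h2) (lt_irrefl _)
  | [x], _, h1, h2, _, _ => absurd (h1.trans h2) (lt_irrefl _)
  | x :: y :: r, hch, h1, h2, hpl, hql => by
    have hxy : (x, y) ∈ A.arcs := (List.isChain_cons_cons.mp hch).1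
    have hch2 := (List.isChain_cons_cons.mp hch).2
    have hxy' : x < y := A.incr (x, y) hxy
    simp only [List.headI_cons] at h1
    rw [glcc] at h2 ⊢
    have hyM : y ≤ (y :: r).getLastI := head_le_last (y :: r) (by simp) (chain_lt hch2)
    have hpy : p ≠ y := fun h => hpl (by simp [h])
    rcases lt_or_gt_of_ne hpy with hpy' | hpy'
    · -- p < y
      have hqy : q ≠ y := fun h => hql (by simp [h])
      rcases lt_or_gt_of_ne hqy with hqy' | hqy'
      · -- q < y : (p,q) nested in (x,y)
        exact Or.inl ⟨hqy'.trans_le hyM,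
          same_side hn hdis hun (arcA2 hxy hpq h1 (A.incr (p, q) hpq) hqy')⟩
      · -- y < q
        have hw := walk hn hdis hun hpq (y :: r) (by simp) hch2 hpy' hqy'
          (fun h => hql (List.mem_cons_of_mem _ h))
        simp only [List.headI_cons] at hw
        have hdxy : ¬ (inBar n Lc p ↔ inBar n Lc y) :=
          diff_side hn hdis hun (arcA1 hxy hpq h1 hpy' hqy')
        have hqM : q ≠ (y :: r).getLastI :=
          fun h => hql (List.mem_cons_of_mem _ (h ▸ glmem (y :: r) (by simp)))
        rcases lt_or_gt_of_ne hqM with h | h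
        · refine Or.inl ⟨h, ?_⟩
          have := hw.1 h
          tauto
        · refine Or.inr ⟨h, ?_⟩
          have := hw.2 h
          tauto
    · -- y < p : recurse on tail
      exact locate hn hdis hun hpq (y :: r) hch2 hpy' h2
        (fun h => hpl (List.mem_cons_of_mem _ h))
        (fun h => hql (List.mem_cons_of_mem _ h))

theorem propagate (hn : 0 < n) (hdis : Disjoint Lc Rc)
    (hun : Lc ∪ Rc = Finset.Icc (1 : ℤ) (n : ℤ)) (γ : List ℤ)
    (hγc : γ.Chain' (fun a b => (a, b) ∈ A.arcs)) :
    ∀ (l : List ℤ), l ≠ [] → l.Chain' (fun a b => (a, b) ∈ A.arcs) →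
      (∀ y ∈ l, y ∉ γ) → γ.headI < l.headI → l.headI < γ.getLastI →
      (l.getLastI < γ.getLastI → (inBar n Lc l.headI ↔ inBar n Lc l.getLastI)) ∧
      (γ.getLastI < l.getLastI → ¬ (inBar n Lc l.headI ↔ inBar n Lc γ.getLastI))
  | [y], _, _, _, _, hM => by
    exact ⟨fun _ => Iff.rfl, fun h => absurd (h.trans hM) (lt_irrefl _)⟩
  | y :: y' :: r, _, hch, hnin, hm, hM => by
    have hyy' : (y, y') ∈ A.arcs := (List.isChain_cons_cons.mp hch).1
    have hch2 := (List.isChain_cons_cons.mp hch).2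
    have hyy'' : y < y' := A.incr (y, y') hyy'
    simp only [List.headI_cons] at hm hM ⊢
    rw [glcc]
    have hy'last : y' ≤ (y' :: r).getLastI :=
      head_le_last (y' :: r) (by simp) (chain_lt hch2)
    rcases locate hn hdis hun hyy' γ hγc hm hM (hnin y (by simp))
      (hnin y' (by simp)) with ⟨hy'M, hiff⟩ | ⟨hMy', hdiff⟩
    · have IH := propagate hn hdis hun γ hγc (y' :: r) (by simp) hch2
        (fun z hz => hnin z (List.mem_cons_of_mem _ hz)) (hm.trans hyy'') hy'M
      simp only [List.headI_cons] at IH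
      exact ⟨fun h => hiff.trans (IH.1 h),
             fun h => fun hc => (IH.2 h) (hiff.symm.trans hc)⟩
    · refine ⟨fun h => absurd (hMy'.trans_le hy'last) (not_lt.mpr h.le), fun _ => hdiff⟩

end Stmt15Aux

/- Statement 15: for two disjoint partial chains γ, γ' with
min(γ) < min(γ') < max(γ), exactly one of the two cases (a), (b) holds. -/
theorem statement15 (n : ℕ) (hn : 0 < n) (Lc Rc : Finset ℤ)
    (hdis : Disjoint Lc Rc) (hun : Lc ∪ Rc = Finset.Icc (1 : ℤ) (n : ℤ))
    (hLne : Lc.Nonempty) (hRne : Rc.Nonempty)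
    (A : CNCAD n Lc Rc) (γ γ' : List ℤ)
    (hγ : IsPChain A γ) (hγ' : IsPChain A γ')
    (hdisj : ∀ x ∈ γ, x ∉ γ')
    (h1 : γ.headI < γ'.headI) (h2 : γ'.headI < γ.getLastI) :
    Xor'
      (γ.getLastI < γ'.getLastI ∧
        ((inBar n Lc γ'.headI ∧ inBar n Rc γ.getLastI) ∨
         (inBar n Rc γ'.headI ∧ inBar n Lc γ.getLastI)))
      (γ'.getLastI < γ.getLastI ∧
        ((inBar n Lc γ'.headI ∧ inBar n Lc γ'.getLastI) ∨
         (inBar n Rc γ'.headI ∧ inBar n Rc γ'.getLastI))) := by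
  obtain ⟨hlen, hchγ⟩ := hγ
  obtain ⟨hlen', hchγ'⟩ := hγ'
  have hγne : γ ≠ [] := by rintro rfl; simp at hlen
  have hγ'ne : γ' ≠ [] := by rintro rfl; simp at hlen'
  have hMM' : γ.getLastI ≠ γ'.getLastI := fun h =>
    hdisj _ (Stmt15Aux.glmem γ hγne) (h ▸ Stmt15Aux.glmem γ' hγ'ne)
  have hnin : ∀ y ∈ γ', y ∉ γ := fun y hy hyγ => hdisj y hyγ hy
  have hp := Stmt15Aux.propagate hn hdis hun γ hchγ γ' hγ'ne hchγ' hnin h1 h2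
  rcases lt_or_gt_of_ne hMM' with h | h
  · exact Or.inl ⟨⟨h, Stmt15Aux.mk_diff hn hdis hun (hp.2 h)⟩,
      fun hb => absurd hb.1 (not_lt.mpr h.le)⟩
  · exact Or.inr ⟨⟨h, Stmt15Aux.mk_same hn hdis hun (hp.1 h)⟩,
      fun ha => absurd ha.1 (not_lt.mpr h.le)⟩

end
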